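/- arXiv:2507.02889 — 3 statements merged into one kernel-verified Lean document; each statement's English description precedes it below -/
import Mathlib

section
/- Let α > 0, β > 0, λ ∈ ℝ, and let s > 0 be a real number. Then ∫₀^∞ e^{−st} · (∑_{k=0}^∞ λ^k · t^{αk+β−1} · (ln t − ψ(αk+β)) / (k! · Γ(αk+β))) dt = − ln s · s^{−β} · exp(λ · s^{−α}). (The integrand series is the term-by-term derivative with respect to β of t^{β−1} W_{α,β}(λ t^α).) -/
open Real MeasureTheory Set

/-- The digamma function `ψ(x) = the logarithmic derivative of Γ`, i.e. the derivative of `log ∘ Γ`. -/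
noncomputable def digamma (x : ℝ) : ℝ := deriv (fun y : ℝ => Real.log (Real.Gamma y)) x

lemma hasDerivAt_Gamma_int {a : ℝ} (ha : 0 < a) :
    HasDerivAt Real.Gamma (∫ t in Ioi (0:ℝ), t ^ (a - 1) * (Real.log t * Real.exp (-t))) a := by
  have h := (Complex.hasDerivAt_GammaIntegral (s := (a : ℂ)) (by simpa using ha)).real_of_complex
  have h2 : (∫ t in Ioi (0:ℝ), (t:ℂ) ^ ((a:ℂ) - 1) * (Real.log t * Real.exp (-t)))
      = ((∫ t in Ioi (0:ℝ), t ^ (a - 1) * (Real.log t * Real.exp (-t)) : ℝ) : ℂ) := by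
    have coe_eq : ∀ r : ℝ, (r : ℂ) = @RCLike.ofReal ℂ _ r := fun r => rfl
    conv_rhs => rw [coe_eq, ← integral_ofReal]
    refine setIntegral_congr_fun measurableSet_Ioi fun t ht => ?_
    rw [← coe_eq]
    rw [show ((a:ℂ) - 1) = ((a - 1 : ℝ) : ℂ) by push_cast; ring, ← Complex.ofReal_cpow ht.le]
    push_cast
    ring
  rw [h2, Complex.ofReal_re] at h
  apply h.congr_of_eventuallyEq
  filter_upwards [eventually_gt_nhds ha] with x hx
  rw [Complex.GammaIntegral_ofReal, Complex.ofReal_re, Real.Gamma_eq_integral hx]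

lemma deriv_Gamma_eq {a : ℝ} (ha : 0 < a) :
    deriv Real.Gamma a = digamma a * Real.Gamma a := by
  have hd : DifferentiableAt ℝ Real.Gamma a :=
    Real.differentiableAt_Gamma fun m => ne_of_gt (lt_of_le_of_lt (neg_nonpos.mpr m.cast_nonneg) ha)
  have hne : Real.Gamma a ≠ 0 := (Real.Gamma_pos_of_pos ha).ne'
  rw [digamma, _root_.deriv.log hd hne, div_mul_cancel₀ _ hne]

lemma digamma_hasderiv {a : ℝ} (ha : 0 < a) :
    DifferentiableAt ℝ (Real.log ∘ Real.Gamma) a := by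
  refine (Real.differentiableAt_Gamma fun m => ?_).log (Real.Gamma_pos_of_pos ha).ne'
  exact ne_of_gt (lt_of_le_of_lt (neg_nonpos.mpr m.cast_nonneg) ha)

lemma abs_digamma_le {x : ℝ} (hx : 2 ≤ x) : |digamma x| ≤ x := by
  have hx0 : (0:ℝ) < x := by linarith
  have hc := Real.convexOn_log_Gamma
  have hdig : digamma x = deriv (Real.log ∘ Real.Gamma) x := by
    simp [digamma, Function.comp_def]
  have hup : digamma x ≤ Real.log x := by
    have := hc.deriv_le_slope (mem_Ioi.mpr hx0) (mem_Ioi.mpr (by linarith : (0:ℝ) < x + 1))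
      (by linarith) (digamma_hasderiv hx0)
    rw [slope_def_field, show x + 1 - x = (1:ℝ) by ring, div_one] at this
    rw [hdig]
    refine this.trans (le_of_eq ?_)
    simp only [Function.comp_apply]
    rw [Real.Gamma_add_one hx0.ne', Real.log_mul hx0.ne' (Real.Gamma_pos_of_pos hx0).ne']
    ring
  have hlo : Real.log (x - 1) ≤ digamma x := by
    have h1 : (0:ℝ) < x - 1 := by linarith
    have := hc.slope_le_deriv (mem_Ioi.mpr h1) (mem_Ioi.mpr hx0) (by linarith)
      (digamma_hasderiv hx0)
    rw [slope_def_field, show x - (x - 1) = (1:ℝ) by ring, div_one] at this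
    rw [hdig]
    refine le_trans (le_of_eq ?_) this
    simp only [Function.comp_apply]
    rw [show x = (x - 1) + 1 by ring, Real.Gamma_add_one h1.ne',
      Real.log_mul h1.ne' (Real.Gamma_pos_of_pos h1).ne']
    ring_nf
  rw [abs_le]
  constructor
  · have : (0:ℝ) ≤ Real.log (x - 1) := Real.log_nonneg (by linarith)
    linarith
  · have : Real.log x ≤ x - 1 := Real.log_le_sub_one_of_pos hx0
    linarith

lemma integrableOn_exp_rpow {a s : ℝ} (ha : 0 < a) (hs : 0 < s) :
    IntegrableOn (fun t : ℝ => Real.exp (-(s*t)) * t ^ (a-1)) (Ioi (0:ℝ)) := by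
  have hg : IntegrableOn (fun u : ℝ => Real.exp (-u) * u ^ (a-1)) (Ioi (0:ℝ)) :=
    Real.GammaIntegral_convergent ha
  have h2 : IntegrableOn (fun t : ℝ => Real.exp (-(s*t)) * (s*t) ^ (a-1)) (Ioi (0:ℝ)) := by
    have h := (integrableOn_Ioi_comp_mul_left_iff
      (fun u : ℝ => Real.exp (-u) * u ^ (a-1)) 0 hs).mpr
    rw [mul_zero] at h
    exact h hg
  have h3 := h2.const_mul (s ^ (1-a))
  refine IntegrableOn.congr_fun h3 (fun t ht => ?_) measurableSet_Ioi
  have ht' : (0:ℝ) < t := ht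
  rw [Real.mul_rpow hs.le ht'.le]
  have h1 : s ^ (1 - a) * s ^ (a - 1) = 1 := by
    rw [← Real.rpow_add hs]; norm_num
  linear_combination (Real.exp (-(s*t)) * t ^ (a-1)) * h1

lemma integral_exp_rpow {a s : ℝ} (ha : 0 < a) (hs : 0 < s) :
    ∫ t in Ioi (0:ℝ), Real.exp (-(s*t)) * t ^ (a-1) = Real.Gamma a * s ^ (-a) := by
  have h := Real.integral_rpow_mul_exp_neg_mul_Ioi ha hs
  rw [one_div, Real.inv_rpow hs.le, ← Real.rpow_neg hs.le] at h
  have h0 : ∫ t in Ioi (0:ℝ), Real.exp (-(s*t)) * t ^ (a-1)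
      = ∫ t in Ioi (0:ℝ), t ^ (a-1) * Real.exp (-(s*t)) := by
    simp_rw [mul_comm]
  rw [h0, h, mul_comm]

lemma abs_log_le {b u : ℝ} (hb : 0 < b) (hu : 0 < u) :
    |Real.log u| ≤ u + (2/b) * u ^ (-(b/2)) := by
  have hpow : (0:ℝ) < u ^ (-(b/2)) := Real.rpow_pos_of_pos hu _
  have hcb : (0:ℝ) < 2/b := by positivity
  rcases le_or_gt 1 u with h1 | h1
  · rw [abs_of_nonneg (Real.log_nonneg h1)]
    have := Real.log_le_sub_one_of_pos hu
    nlinarith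
  · rw [abs_of_nonpos (Real.log_nonpos hu.le h1.le)]
    have hui : (0:ℝ) < u⁻¹ := inv_pos.mpr hu
    have hlog : Real.log (u⁻¹ ^ (b/2)) = (b/2) * Real.log u⁻¹ := Real.log_rpow hui _
    have h2 : Real.log (u⁻¹ ^ (b/2)) ≤ u⁻¹ ^ (b/2) - 1 :=
      Real.log_le_sub_one_of_pos (Real.rpow_pos_of_pos hui _)
    have h3 : u⁻¹ ^ (b/2) = u ^ (-(b/2)) := by
      rw [Real.inv_rpow hu.le, Real.rpow_neg hu.le]
    rw [h3] at h2
    rw [Real.log_inv] at hlog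
    have h5 : (b/2) * (-Real.log u) ≤ u ^ (-(b/2)) := by
      rw [← hlog]; linarith [Real.log_le_sub_one_of_pos (show (0:ℝ) < u⁻¹ ^ (b/2) from Real.rpow_pos_of_pos hui _), h2, hlog]
    have h6 := mul_le_mul_of_nonneg_left h5 hcb.le
    have hbb : (2/b) * (b/2) = 1 := by field_simp
    nlinarith

lemma rpow_merge1 {t a : ℝ} (ht : 0 < t) : t ^ (a-1) * t = t ^ ((a+1)-1) := by
  rw [show ((a+1)-1) = (a-1) + 1 by ring, Real.rpow_add ht, Real.rpow_one]

lemma rpow_merge2 {t a b : ℝ} (ht : 0 < t) : t ^ (a-1) * t ^ (-(b/2)) = t ^ ((a-b/2)-1) := by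
  rw [← Real.rpow_add ht]; ring_nf

lemma integrableOn_exp_rpow_log {a s : ℝ} (ha : 0 < a) (hs : 0 < s) :
    IntegrableOn (fun t : ℝ => Real.exp (-(s*t)) * (t ^ (a-1) * Real.log t)) (Ioi (0:ℝ)) := by
  have hab : (0:ℝ) < a - a/2 := by linarith
  have ha1 : (0:ℝ) < a + 1 := by linarith
  have hg := (integrableOn_exp_rpow ha1 hs).add
    ((integrableOn_exp_rpow hab hs).const_mul (2/a))
  refine Integrable.mono' hg (ContinuousOn.aestronglyMeasurable ?_ measurableSet_Ioi) ?_
  · refine ContinuousOn.mul (Continuous.continuousOn (by fun_prop)) (ContinuousOn.mul ?_ ?_)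
    · exact fun t ht =>
        (Real.continuousAt_rpow_const t (a-1) (Or.inl (ne_of_gt ht))).continuousWithinAt
    · exact fun t ht => (Real.continuousAt_log (ne_of_gt ht)).continuousWithinAt
  · filter_upwards [self_mem_ae_restrict measurableSet_Ioi] with t ht
    have ht' : (0:ℝ) < t := ht
    have habs := abs_log_le ha ht'
    have hexp : (0:ℝ) < Real.exp (-(s*t)) := Real.exp_pos _
    have hp : (0:ℝ) < t ^ (a-1) := Real.rpow_pos_of_pos ht' _
    rw [Real.norm_eq_abs, abs_mul, abs_mul, abs_of_pos hexp, abs_of_pos hp]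
    have step : t ^ (a-1) * |Real.log t| ≤ t ^ (a-1) * (t + (2/a) * t ^ (-(a/2))) :=
      mul_le_mul_of_nonneg_left habs hp.le
    calc Real.exp (-(s*t)) * (t ^ (a-1) * |Real.log t|)
        ≤ Real.exp (-(s*t)) * (t ^ (a-1) * (t + (2/a) * t ^ (-(a/2)))) :=
          mul_le_mul_of_nonneg_left step hexp.le
      _ = Real.exp (-(s*t)) * t ^ ((a+1)-1) + 2/a * (Real.exp (-(s*t)) * t ^ ((a-a/2)-1)) := by
          linear_combination Real.exp (-(s*t)) * rpow_merge1 (a := a) ht'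
            + (2/a) * Real.exp (-(s*t)) * rpow_merge2 (a := a) (b := a) ht'



lemma integral_exp_rpow_log {a s : ℝ} (ha : 0 < a) (hs : 0 < s) :
    ∫ t in Ioi (0:ℝ), Real.exp (-(s*t)) * (t ^ (a-1) * Real.log t)
      = s ^ (-a) * (deriv Real.Gamma a - Real.Gamma a * Real.log s) := by
  have hG := (hasDerivAt_Gamma_int ha).deriv
  have hsub := integral_comp_mul_left_Ioi
    (fun u : ℝ => u ^ (a-1) * (Real.log u * Real.exp (-u))) 0 hs
  rw [mul_zero] at hsub
  rw [← hG, smul_eq_mul] at hsub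
  have hexpand : ∀ t ∈ Ioi (0:ℝ), (s*t) ^ (a-1) * (Real.log (s*t) * Real.exp (-(s*t)))
      = s ^ (a-1) * (Real.log s * (Real.exp (-(s*t)) * t ^ (a-1))
          + Real.exp (-(s*t)) * (t ^ (a-1) * Real.log t)) := by
    intro t ht
    rw [Real.mul_rpow hs.le (le_of_lt ht), Real.log_mul hs.ne' (ne_of_gt ht)]
    ring
  rw [setIntegral_congr_fun measurableSet_Ioi hexpand, integral_const_mul _ _,
    integral_add ((integrableOn_exp_rpow ha hs).const_mul _) (integrableOn_exp_rpow_log ha hs),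
    integral_const_mul _ _, integral_exp_rpow ha hs] at hsub
  set L := ∫ t in Ioi (0:ℝ), Real.exp (-(s*t)) * (t ^ (a-1) * Real.log t) with hL
  set G := deriv Real.Gamma a with hGd
  have hA : s ^ (-(a-1)) * s ^ (a-1) = 1 := by rw [← Real.rpow_add hs]; norm_num
  have hB : s ^ (-(a-1)) * s⁻¹ = s ^ (-a) := by
    rw [← Real.rpow_neg_one s, ← Real.rpow_add hs]; congr 1; ring
  have h3 : Real.log s * (Real.Gamma a * s ^ (-a)) + L = s ^ (-(a-1)) * (s⁻¹ * G) := by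
    calc Real.log s * (Real.Gamma a * s ^ (-a)) + L
        = (s ^ (-(a-1)) * s ^ (a-1)) * (Real.log s * (Real.Gamma a * s ^ (-a)) + L) := by
          rw [hA, one_mul]
      _ = s ^ (-(a-1)) * (s ^ (a-1) * (Real.log s * (Real.Gamma a * s ^ (-a)) + L)) := by ring
      _ = s ^ (-(a-1)) * (s⁻¹ * G) := by rw [hsub]
  have h4 : s ^ (-(a-1)) * (s⁻¹ * G) = s ^ (-a) * G := by rw [← mul_assoc, hB]
  rw [h4] at h3
  linarith [h3]

lemma integrableOn_key {a s : ℝ} (ha : 0 < a) (hs : 0 < s) (c : ℝ) :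
    IntegrableOn (fun t : ℝ => Real.exp (-(s*t)) * (t ^ (a-1) * (Real.log t - c)))
      (Ioi (0:ℝ)) := by
  have h1 : (fun t : ℝ => Real.exp (-(s*t)) * (t ^ (a-1) * (Real.log t - c)))
      = fun t : ℝ => Real.exp (-(s*t)) * (t ^ (a-1) * Real.log t)
          - c * (Real.exp (-(s*t)) * t ^ (a-1)) := by
    funext t; ring
  rw [h1]
  exact (integrableOn_exp_rpow_log ha hs).sub ((integrableOn_exp_rpow ha hs).const_mul c)

lemma key_integral {a s : ℝ} (ha : 0 < a) (hs : 0 < s) :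
    ∫ t in Ioi (0:ℝ), Real.exp (-(s*t)) * (t ^ (a-1) * (Real.log t - digamma a))
      = -(Real.log s) * (Real.Gamma a * s ^ (-a)) := by
  have h1 : (fun t : ℝ => Real.exp (-(s*t)) * (t ^ (a-1) * (Real.log t - digamma a)))
      = fun t : ℝ => Real.exp (-(s*t)) * (t ^ (a-1) * Real.log t)
          - digamma a * (Real.exp (-(s*t)) * t ^ (a-1)) := by
    funext t; ring
  rw [h1, integral_sub (integrableOn_exp_rpow_log ha hs)
      ((integrableOn_exp_rpow ha hs).const_mul _),
    integral_const_mul _ _, integral_exp_rpow ha hs, integral_exp_rpow_log ha hs,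
    deriv_Gamma_eq ha]
  ring



lemma norm_integral_le_bound {b a s : ℝ} (hb : 0 < b) (hba : b ≤ a) (hs : 0 < s) (c : ℝ) :
    (∫ t in Ioi (0:ℝ), ‖Real.exp (-(s*t)) * (t ^ (a-1) * (Real.log t - c))‖)
      ≤ Real.Gamma (a+1) * s ^ (-(a+1)) + (2/b) * (Real.Gamma (a-b/2) * s ^ (-(a-b/2)))
        + |c| * (Real.Gamma a * s ^ (-a)) := by
  have ha : 0 < a := lt_of_lt_of_le hb hba
  have hab : (0:ℝ) < a - b/2 := by linarith
  have ha1 : (0:ℝ) < a + 1 := by linarith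
  have hgint := ((integrableOn_exp_rpow ha1 hs).add
      ((integrableOn_exp_rpow hab hs).const_mul (2/b))).add
      ((integrableOn_exp_rpow ha hs).const_mul |c|)
  have hfint := (integrableOn_key ha hs c).norm
  have hle : (∫ t in Ioi (0:ℝ), ‖Real.exp (-(s*t)) * (t ^ (a-1) * (Real.log t - c))‖)
      ≤ ∫ t in Ioi (0:ℝ), (Real.exp (-(s*t)) * t ^ ((a+1)-1)
          + 2/b * (Real.exp (-(s*t)) * t ^ ((a-b/2)-1))
          + |c| * (Real.exp (-(s*t)) * t ^ (a-1))) := by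
    refine integral_mono_ae hfint hgint ?_
    filter_upwards [self_mem_ae_restrict measurableSet_Ioi] with t ht
    have ht' : (0:ℝ) < t := ht
    have hexp : (0:ℝ) < Real.exp (-(s*t)) := Real.exp_pos _
    have hp : (0:ℝ) < t ^ (a-1) := Real.rpow_pos_of_pos ht' _
    have habs2 : |Real.log t - c| ≤ |Real.log t| + |c| := by
      rw [sub_eq_add_neg]
      exact (abs_add_le _ _).trans (by rw [abs_neg])
    have habs := abs_log_le hb ht'
    rw [Real.norm_eq_abs, abs_mul, abs_mul, abs_of_pos hexp, abs_of_pos hp]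
    have step : t ^ (a-1) * |Real.log t - c|
        ≤ t ^ (a-1) * (t + (2/b) * t ^ (-(b/2)) + |c|) :=
      mul_le_mul_of_nonneg_left (by linarith) hp.le
    calc Real.exp (-(s*t)) * (t ^ (a-1) * |Real.log t - c|)
        ≤ Real.exp (-(s*t)) * (t ^ (a-1) * (t + (2/b) * t ^ (-(b/2)) + |c|)) :=
          mul_le_mul_of_nonneg_left step hexp.le
      _ = Real.exp (-(s*t)) * t ^ ((a+1)-1) + 2/b * (Real.exp (-(s*t)) * t ^ ((a-b/2)-1))
          + |c| * (Real.exp (-(s*t)) * t ^ (a-1)) := by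
          linear_combination Real.exp (-(s*t)) * rpow_merge1 (a := a) ht'
            + (2/b) * Real.exp (-(s*t)) * rpow_merge2 (a := a) (b := b) ht'
  refine hle.trans (le_of_eq ?_)
  have iA : Integrable (fun t : ℝ => Real.exp (-(s*t)) * t ^ ((a+1)-1))
      (volume.restrict (Ioi 0)) := integrableOn_exp_rpow ha1 hs
  have iB : Integrable (fun t : ℝ => 2/b * (Real.exp (-(s*t)) * t ^ ((a-b/2)-1)))
      (volume.restrict (Ioi 0)) := (integrableOn_exp_rpow hab hs).const_mul _
  have iC : Integrable (fun t : ℝ => |c| * (Real.exp (-(s*t)) * t ^ (a-1)))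
      (volume.restrict (Ioi 0)) := (integrableOn_exp_rpow ha hs).const_mul _
  have iAB : Integrable (fun t : ℝ => Real.exp (-(s*t)) * t ^ ((a+1)-1)
      + 2/b * (Real.exp (-(s*t)) * t ^ ((a-b/2)-1))) (volume.restrict (Ioi 0)) := iA.add iB
  rw [integral_add iAB iC, integral_add iA iB,
    integral_const_mul _ _, integral_const_mul _ _, integral_exp_rpow ha1 hs,
    integral_exp_rpow hab hs, integral_exp_rpow ha hs]

lemma rpow_split {α s : ℝ} (hs : 0 < s) (k : ℕ) (e : ℝ) :
    s ^ (-(α * (k:ℝ) + e)) = (s ^ (-α)) ^ k * s ^ (-e) := by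
  rw [show (-(α * (k:ℝ) + e)) = (-α) * (k:ℝ) + (-e) by ring, Real.rpow_add hs,
    Real.rpow_mul hs.le, Real.rpow_natCast]

set_option maxHeartbeats 1000000 in

theorem laplace_deriv_beta_Wright2 (α β lam s : ℝ) (hα : 0 < α) (hβ : 0 < β) (hs : 0 < s) :
    (∫ t in Set.Ioi (0 : ℝ), Real.exp (-(s * t)) *
        ∑' k : ℕ, lam ^ k * t ^ (α * k + β - 1) *
          (Real.log t - digamma (α * k + β)) / (k.factorial * Real.Gamma (α * k + β)))
      = -(Real.log s * s ^ (-β) * Real.exp (lam * s ^ (-α))) := by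
  have hρ0 : (0:ℝ) < s ^ (-α) := Real.rpow_pos_of_pos hs _
  set ρ : ℝ := |lam| * s ^ (-α) with hρdef
  have hρnn : 0 ≤ ρ := by positivity
  have hak : ∀ k : ℕ, (0:ℝ) < α * k + β := fun k => by positivity
  have hbak : ∀ k : ℕ, β ≤ α * k + β := fun k => by
    nlinarith [mul_nonneg hα.le (Nat.cast_nonneg (α := ℝ) k)]
  set f : ℕ → ℝ → ℝ := fun k t => Real.exp (-(s * t)) *
      (lam ^ k * t ^ (α * k + β - 1) * (Real.log t - digamma (α * k + β)) /
        (k.factorial * Real.Gamma (α * k + β))) with hfdef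
  have hfk : ∀ k : ℕ, f k = fun t : ℝ =>
      (lam ^ k / (k.factorial * Real.Gamma (α * k + β))) *
        (Real.exp (-(s*t)) * (t ^ (α * k + β - 1) * (Real.log t - digamma (α * k + β)))) :=
    fun k => funext fun t => by simp only [hfdef]; ring
  have h_int : ∀ k : ℕ, Integrable (f k) (volume.restrict (Ioi (0:ℝ))) := by
    intro k
    rw [hfk k]
    exact (integrableOn_key (hak k) hs _).const_mul _
  -- norm bound
  have hnorm : ∀ k : ℕ, (∫ t in Ioi (0:ℝ), ‖f k t‖)
      ≤ (|lam| ^ k / (k.factorial * Real.Gamma (α * k + β))) *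
          (Real.Gamma (α * k + β + 1) * s ^ (-(α * k + β + 1))
            + (2/β) * (Real.Gamma (α * k + β - β/2) * s ^ (-(α * k + β - β/2)))
            + |digamma (α * k + β)| * (Real.Gamma (α * k + β) * s ^ (-(α * k + β)))) := by
    intro k
    have hΓ : (0:ℝ) < Real.Gamma (α * k + β) := Real.Gamma_pos_of_pos (hak k)
    have hfa : (0:ℝ) < k.factorial := by exact_mod_cast k.factorial_pos
    have habs : |lam ^ k / ((k.factorial : ℝ) * Real.Gamma (α * k + β))|
        = |lam| ^ k / ((k.factorial : ℝ) * Real.Gamma (α * k + β)) := by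
      rw [abs_div, abs_pow, abs_of_pos (mul_pos hfa hΓ)]
    have h1 : (∫ t in Ioi (0:ℝ), ‖f k t‖)
        = (|lam| ^ k / (k.factorial * Real.Gamma (α * k + β))) *
          ∫ t in Ioi (0:ℝ), ‖Real.exp (-(s*t)) *
            (t ^ (α * k + β - 1) * (Real.log t - digamma (α * k + β)))‖ := by
      rw [hfk k]
      simp_rw [norm_mul, Real.norm_eq_abs (lam ^ k / _), habs]
      rw [integral_const_mul _ _]
    rw [h1]
    refine mul_le_mul_of_nonneg_left ?_ (by positivity)
    exact norm_integral_le_bound hβ (hbak k) hs _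
  -- summability
  set C1 : ℝ := (2/β) * s ^ (-(β/2)) with hC1
  set C2 : ℝ := (α + β) * (s ^ (-(β+1)) + s ^ (-β)) with hC2
  set M : ℕ → ℝ := fun k => C1 * (ρ ^ k / k.factorial) + C2 * ((2*ρ) ^ k / k.factorial)
    with hM
  have hMsum : Summable M :=
    ((Real.summable_pow_div_factorial ρ).mul_left C1).add
      ((Real.summable_pow_div_factorial (2*ρ)).mul_left C2)
  have hBM : ∀ k : ℕ, (2:ℝ) ≤ α * k + β/2 →
      (|lam| ^ k / (k.factorial * Real.Gamma (α * k + β))) *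
          (Real.Gamma (α * k + β + 1) * s ^ (-(α * k + β + 1))
            + (2/β) * (Real.Gamma (α * k + β - β/2) * s ^ (-(α * k + β - β/2)))
            + |digamma (α * k + β)| * (Real.Gamma (α * k + β) * s ^ (-(α * k + β))))
        ≤ M k := by
    intro k hk2
    have hΓ : (0:ℝ) < Real.Gamma (α * k + β) := Real.Gamma_pos_of_pos (hak k)
    have hfa : (0:ℝ) < k.factorial := by exact_mod_cast k.factorial_pos
    have hs1 : s ^ (-(α * k + β + 1)) = (s ^ (-α)) ^ k * s ^ (-(β+1)) := by
      rw [show (-(α * (k:ℝ) + β + 1)) = -(α * (k:ℝ) + (β+1)) by ring, rpow_split hs]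
    have hs2 : s ^ (-(α * k + β - β/2)) = (s ^ (-α)) ^ k * s ^ (-(β/2)) := by
      rw [show (-(α * (k:ℝ) + β - β/2)) = -(α * (k:ℝ) + (β/2)) by ring, rpow_split hs]
    have hs3 : s ^ (-(α * k + β)) = (s ^ (-α)) ^ k * s ^ (-β) := rpow_split hs k β
    have hg1 : Real.Gamma (α * k + β + 1) = (α * k + β) * Real.Gamma (α * k + β) :=
      Real.Gamma_add_one (hak k).ne'
    have hg2 : Real.Gamma (α * k + β - β/2) ≤ Real.Gamma (α * k + β) := by
      refine Real.Gamma_strictMonoOn_Ici.monotoneOn ?_ ?_ (by linarith)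
      · exact mem_Ici.mpr (by linarith)
      · exact mem_Ici.mpr (by linarith)
    have hψ : |digamma (α * k + β)| ≤ α * k + β := abs_digamma_le (by linarith)
    have hk2p : (k:ℝ) ≤ 2 ^ k := by exact_mod_cast (Nat.lt_two_pow_self (n := k)).le
    have h2p1 : (1:ℝ) ≤ 2 ^ k := one_le_pow₀ (by norm_num)
    have hK : α * k + β ≤ (α + β) * 2 ^ k := by nlinarith
    set P : ℝ := (s ^ (-α)) ^ k with hP
    have hPpos : 0 < P := by positivity
    set u1 : ℝ := s ^ (-(β+1)) with hu1
    set u2 : ℝ := s ^ (-(β/2)) with hu2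
    set u3 : ℝ := s ^ (-β) with hu3
    have hu1p : 0 < u1 := Real.rpow_pos_of_pos hs _
    have hu2p : 0 < u2 := Real.rpow_pos_of_pos hs _
    have hu3p : 0 < u3 := Real.rpow_pos_of_pos hs _
    rw [hs1, hs2, hs3, hg1]
    have b1 : (α * k + β) * Real.Gamma (α * k + β) * (P * u1)
        ≤ ((α + β) * 2 ^ k) * (Real.Gamma (α * k + β) * (P * u1)) := by
      rw [← mul_assoc ((α + β) * 2 ^ k)]
      exact mul_le_mul_of_nonneg_right
        (mul_le_mul_of_nonneg_right hK hΓ.le) (by positivity)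
    have b2 : (2/β) * (Real.Gamma (α * k + β - β/2) * (P * u2))
        ≤ (2/β) * (Real.Gamma (α * k + β) * (P * u2)) := by
      refine mul_le_mul_of_nonneg_left (mul_le_mul_of_nonneg_right hg2 (by positivity))
        (by positivity)
    have b3 : |digamma (α * k + β)| * (Real.Gamma (α * k + β) * (P * u3))
        ≤ ((α + β) * 2 ^ k) * (Real.Gamma (α * k + β) * (P * u3)) :=
      mul_le_mul_of_nonneg_right (hψ.trans hK) (by positivity)
    have hsum_le : (α * k + β) * Real.Gamma (α * k + β) * (P * u1)
          + (2/β) * (Real.Gamma (α * k + β - β/2) * (P * u2))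
          + |digamma (α * k + β)| * (Real.Gamma (α * k + β) * (P * u3))
        ≤ Real.Gamma (α * k + β) *
            (((α + β) * 2 ^ k) * (P * u1) + (2/β) * (P * u2) + ((α + β) * 2 ^ k) * (P * u3)) := by
      nlinarith [b1, b2, b3]
    calc (|lam| ^ k / (k.factorial * Real.Gamma (α * k + β))) *
          ((α * k + β) * Real.Gamma (α * k + β) * (P * u1)
            + (2/β) * (Real.Gamma (α * k + β - β/2) * (P * u2))
            + |digamma (α * k + β)| * (Real.Gamma (α * k + β) * (P * u3)))
        ≤ (|lam| ^ k / (k.factorial * Real.Gamma (α * k + β))) *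
            (Real.Gamma (α * k + β) *
              (((α + β) * 2 ^ k) * (P * u1) + (2/β) * (P * u2) + ((α + β) * 2 ^ k) * (P * u3))) :=
          mul_le_mul_of_nonneg_left hsum_le (by positivity)
      _ = M k := by
          simp only [hM, hρdef, hC1, hC2]
          have e1 : (|lam| * s ^ (-α)) ^ k = |lam| ^ k * P := by rw [mul_pow, hP]
          have e2 : (2 * (|lam| * s ^ (-α))) ^ k = 2 ^ k * (|lam| ^ k * P) := by
            rw [mul_pow, mul_pow, hP]
          rw [e1, e2]
          field_simp
          ring
  have hsum : Summable fun k : ℕ => ∫ t in Ioi (0:ℝ), ‖f k t‖ := by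
    set N : ℕ := ⌈2/α⌉₊ with hN
    have hαN : (2:ℝ) ≤ α * N := by
      have h1 : (2/α : ℝ) ≤ N := Nat.le_ceil _
      calc (2:ℝ) = α * (2/α) := by field_simp
        _ ≤ α * N := mul_le_mul_of_nonneg_left h1 hα.le
    rw [← summable_nat_add_iff N]
    refine Summable.of_nonneg_of_le (fun n => integral_nonneg fun t => norm_nonneg _)
      (fun n => ?_) ((summable_nat_add_iff N).mpr hMsum)
    have hk2 : (2:ℝ) ≤ α * ((n + N : ℕ):ℝ) + β/2 := by
      have : (N:ℝ) ≤ ((n + N : ℕ):ℝ) := by push_cast; linarith [Nat.cast_nonneg (α := ℝ) n]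
      nlinarith [mul_le_mul_of_nonneg_left this hα.le]
    exact (hnorm (n + N)).trans (hBM (n + N) hk2)
  -- interchange
  have hcongr : (∫ t in Set.Ioi (0 : ℝ), Real.exp (-(s * t)) *
        ∑' k : ℕ, lam ^ k * t ^ (α * k + β - 1) *
          (Real.log t - digamma (α * k + β)) / (k.factorial * Real.Gamma (α * k + β)))
      = ∫ t in Ioi (0:ℝ), ∑' k : ℕ, f k t := by
    refine integral_congr_ae (Filter.Eventually.of_forall fun t => ?_)
    exact (tsum_mul_left).symm
  rw [hcongr, ← integral_tsum_of_summable_integral_norm h_int hsum]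
  have hintval : ∀ k : ℕ, (∫ t in Ioi (0:ℝ), f k t)
      = (-(Real.log s) * s ^ (-β)) * ((lam * s ^ (-α)) ^ k / k.factorial) := by
    intro k
    have hΓ : (0:ℝ) < Real.Gamma (α * k + β) := Real.Gamma_pos_of_pos (hak k)
    have hfa : (0:ℝ) < k.factorial := by exact_mod_cast k.factorial_pos
    rw [hfk k, integral_const_mul _ _, key_integral (hak k) hs, rpow_split hs k β, mul_pow]
    field_simp
  rw [tsum_congr hintval, tsum_mul_left]
  have hexp : ∑' k : ℕ, (lam * s ^ (-α)) ^ k / (k.factorial : ℝ)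
      = Real.exp (lam * s ^ (-α)) := by
    rw [Real.exp_eq_exp_ℝ, NormedSpace.exp_eq_tsum_div]
  rw [hexp]
  ring
end

section
/- Let α₁, β₁, α₂, β₂ > 0, λ ∈ ℝ, and let s > 0 be a real number. Then ∫₀^∞ e^{−st} · (∑_{k=0}^∞ (− ψ(α₂k+β₂)) · λ^k · t^{α₁k+β₁−1} / (Γ(α₁k+β₁) · Γ(α₂k+β₂))) dt = − (1/s^{β₁}) · ∑_{k=0}^∞ (ψ(α₂k+β₂) / Γ(α₂k+β₂)) · (λ · s^{−α₁})^k. (The integrand series is the term-by-term derivative with respect to β₂ of t^{β₁−1} E_{(α₁,β₁),(α₂,β₂)}(λ t^{α₁}).) -/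
open Real MeasureTheory Set Filter

lemma diff_logGamma {x : ℝ} (hx : 0 < x) :
    DifferentiableAt ℝ (fun y : ℝ => Real.log (Real.Gamma y)) x := by
  refine (Real.differentiableAt_Gamma ?_).log (Real.Gamma_ne_zero ?_) <;>
    exact fun m => ne_of_gt (lt_of_le_of_lt (neg_nonpos.mpr (Nat.cast_nonneg m)) hx)

lemma convexf : ConvexOn ℝ (Ioi 0) (fun y : ℝ => Real.log (Real.Gamma y)) := by
  have := Real.convexOn_log_Gamma
  simpa [Function.comp_def] using this

lemma digamma_le_log {x : ℝ} (hx : 0 < x) : digamma x ≤ Real.log x := by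
  have h := convexf.deriv_le_slope (mem_Ioi.mpr hx) (mem_Ioi.mpr (by linarith : (0:ℝ) < x + 1))
    (by linarith) (diff_logGamma hx)
  refine h.trans (le_of_eq ?_)
  rw [slope_def_field, show x + 1 - x = (1:ℝ) by ring, div_one, Real.Gamma_add_one hx.ne',
    Real.log_mul hx.ne' (Real.Gamma_pos_of_pos hx).ne', add_sub_cancel_right]

lemma log_le_digamma {x : ℝ} (hx : 1 < x) : Real.log (x - 1) ≤ digamma x := by
  have h := convexf.slope_le_deriv (mem_Ioi.mpr (by linarith : (0:ℝ) < x - 1))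
    (mem_Ioi.mpr (by linarith : (0:ℝ) < x)) (by linarith) (diff_logGamma (by linarith))
  refine le_trans (le_of_eq ?_) h
  rw [slope_def_field, show x - (x - 1) = (1:ℝ) by ring, div_one,
    show x = (x - 1) + 1 by ring, Real.Gamma_add_one (by linarith : x - 1 ≠ 0),
    Real.log_mul (by linarith : x - 1 ≠ 0) (Real.Gamma_pos_of_pos (by linarith)).ne']
  ring_nf

lemma Gamma_ratio {x a : ℝ} (hx : 1 < x) (ha : 0 < a) :
    Real.Gamma x * (x - 1) ^ a ≤ Real.Gamma (x + a) := by
  have hx0 : (0:ℝ) < x := by linarith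
  have h := convexf.deriv_le_slope (mem_Ioi.mpr hx0) (mem_Ioi.mpr (by linarith : (0:ℝ) < x + a))
    (by linarith) (diff_logGamma hx0)
  rw [slope_def_field, show x + a - x = a by ring] at h
  have h2 : Real.log (x - 1) ≤ (Real.log (Real.Gamma (x+a)) - Real.log (Real.Gamma x)) / a :=
    (log_le_digamma hx).trans h
  have h3 : Real.log (Real.Gamma x) + a * Real.log (x - 1) ≤ Real.log (Real.Gamma (x + a)) := by
    rw [le_div_iff₀ ha] at h2; nlinarith
  have h4 : Real.log (Real.Gamma x * (x - 1) ^ a) ≤ Real.log (Real.Gamma (x + a)) := by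
    have hx1 : (0:ℝ) < x - 1 := by linarith
    rwa [Real.log_mul (Real.Gamma_pos_of_pos hx0).ne' (by positivity), Real.log_rpow hx1]
  have := Real.exp_le_exp.mpr h4
  have hx1 : (0:ℝ) < x - 1 := by linarith
  have hg : (0:ℝ) < Real.Gamma x := Real.Gamma_pos_of_pos hx0
  rwa [Real.exp_log (by positivity), Real.exp_log (Real.Gamma_pos_of_pos (by linarith))] at this

lemma summable_digamma_div_Gamma {α₂ β₂ r : ℝ} (hα₂ : 0 < α₂) (hβ₂ : 0 < β₂) (hr : 0 ≤ r) :
    Summable (fun k : ℕ => |digamma (α₂ * k + β₂)| / Real.Gamma (α₂ * k + β₂) * r ^ k) := by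
  obtain ⟨x, hxdef⟩ : ∃ x : ℕ → ℝ, ∀ k, x k = α₂ * k + β₂ := ⟨_, fun k => rfl⟩
  suffices h : Summable (fun k : ℕ => |digamma (x k)| / Real.Gamma (x k) * r ^ k) by
    refine h.congr fun k => ?_
    rw [hxdef]
  have hxpos : ∀ k, 0 < x k := fun k => by
    have : (0:ℝ) ≤ α₂ * k := by positivity
    rw [hxdef]; linarith
  have hxt : Tendsto x atTop atTop := by
    have : Tendsto (fun k : ℕ => α₂ * k + β₂) atTop atTop :=
      tendsto_atTop_add_const_right _ _
        ((tendsto_natCast_atTop_atTop (R := ℝ)).const_mul_atTop hα₂)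
    exact this.congr fun k => (hxdef k).symm
  obtain ⟨g, hgdef⟩ : ∃ g : ℕ → ℝ, ∀ k, g k = x k / Real.Gamma (x k) * r ^ k :=
    ⟨_, fun k => rfl⟩
  have hgnonneg : ∀ k, 0 ≤ g k := fun k => by
    have h1 := (hxpos k).le
    have h2 := (Real.Gamma_pos_of_pos (hxpos k)).le
    have h3 := pow_nonneg hr k
    rw [hgdef]; positivity
  have hsg : Summable g := by
    apply summable_of_ratio_norm_eventually_le (r := 1/2) (by norm_num)
    have hev1 : ∀ᶠ k in atTop, 2 ≤ x k := hxt.eventually (eventually_ge_atTop 2)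
    have hev2 : ∀ᶠ k in atTop, α₂ ≤ x k := hxt.eventually (eventually_ge_atTop α₂)
    have hrt : Tendsto (fun k => (x k - 1) ^ α₂) atTop atTop :=
      (tendsto_rpow_atTop hα₂).comp (hxt.atTop_add tendsto_const_nhds)
    have hev3 : ∀ᶠ k in atTop, 4 * r + 1 ≤ (x k - 1) ^ α₂ :=
      hrt.eventually (eventually_ge_atTop (4 * r + 1))
    filter_upwards [hev1, hev2, hev3] with k h2 hα h4
    have hx1 : 1 < x k := by linarith
    have hG : 0 < Real.Gamma (x k) := Real.Gamma_pos_of_pos (hxpos k)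
    have hGs : 0 < Real.Gamma (x (k + 1)) := Real.Gamma_pos_of_pos (hxpos (k + 1))
    have hxk1 : x (k + 1) = x k + α₂ := by rw [hxdef, hxdef]; push_cast; ring
    have hratio : Real.Gamma (x k) * (x k - 1) ^ α₂ ≤ Real.Gamma (x (k + 1)) := by
      rw [hxk1]; exact Gamma_ratio hx1 hα₂
    have hP : (0:ℝ) < (x k - 1) ^ α₂ := Real.rpow_pos_of_pos (by linarith) _
    rw [Real.norm_eq_abs, Real.norm_eq_abs, abs_of_nonneg (hgnonneg _), abs_of_nonneg (hgnonneg _)]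
    have hstep1 : g (k + 1) ≤ x (k + 1) / (Real.Gamma (x k) * (x k - 1) ^ α₂) * r ^ (k + 1) := by
      rw [hgdef]
      apply mul_le_mul_of_nonneg_right _ (pow_nonneg hr _)
      exact div_le_div_of_nonneg_left (by linarith [hxpos (k+1)]) (mul_pos hG hP) hratio
    refine hstep1.trans ?_
    have hkey : x (k + 1) * r ≤ (1/2) * (x k * ((x k - 1) ^ α₂)) := by
      have h1 : x (k + 1) ≤ 2 * x k := by rw [hxk1]; linarith
      have ha : x (k + 1) * r ≤ 2 * x k * r := mul_le_mul_of_nonneg_right h1 hr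
      have hx0 : (0:ℝ) ≤ x k := (hxpos k).le
      have hb : x k * (4 * r + 1) ≤ x k * ((x k - 1) ^ α₂) := mul_le_mul_of_nonneg_left h4 hx0
      calc x (k + 1) * r ≤ 2 * x k * r := ha
        _ ≤ (1/2) * (x k * (4 * r + 1)) := by ring_nf; linarith
        _ ≤ (1/2) * (x k * ((x k - 1) ^ α₂)) := by linarith
    have : x (k + 1) / (Real.Gamma (x k) * (x k - 1) ^ α₂) * r ^ (k + 1)
        = (x (k + 1) * r) * (r ^ k / (Real.Gamma (x k) * (x k - 1) ^ α₂)) := by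
      rw [pow_succ]; field_simp
    rw [this]
    have h2' : (1/2) * g k = ((1/2) * (x k * ((x k - 1) ^ α₂))) *
        (r ^ k / (Real.Gamma (x k) * (x k - 1) ^ α₂)) := by
      rw [hgdef]; field_simp
    rw [h2']
    exact mul_le_mul_of_nonneg_right hkey (by positivity)
  apply Summable.of_norm_bounded_eventually_nat hsg
  filter_upwards [hxt.eventually (eventually_ge_atTop 2)] with k h2
  have hx1 : 1 < x k := by linarith
  have hG : 0 < Real.Gamma (x k) := Real.Gamma_pos_of_pos (hxpos k)
  have habs : |digamma (x k)| ≤ x k := by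
    rw [abs_le]
    constructor
    · have := log_le_digamma hx1
      have hl : 0 ≤ Real.log (x k - 1) := Real.log_nonneg (by linarith)
      linarith [hxpos k]
    · have := digamma_le_log (hxpos k)
      have := Real.log_le_sub_one_of_pos (hxpos k)
      linarith
  have hnn : (0:ℝ) ≤ |digamma (x k)| / Real.Gamma (x k) * r ^ k := by
    have h1 := abs_nonneg (digamma (x k))
    have h2 := pow_nonneg hr k
    positivity
  rw [Real.norm_eq_abs, abs_of_nonneg hnn]
  rw [hgdef]
  exact mul_le_mul_of_nonneg_right (div_le_div_of_nonneg_right habs hG.le) (pow_nonneg hr k)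

theorem laplace_deriv_beta2_4ML (α₁ β₁ α₂ β₂ lam s : ℝ) (hα₁ : 0 < α₁) (hβ₁ : 0 < β₁)
    (hα₂ : 0 < α₂) (hβ₂ : 0 < β₂) (hs : 0 < s) :
    (∫ t in Set.Ioi (0 : ℝ), Real.exp (-(s * t)) *
        ∑' k : ℕ, (-(digamma (α₂ * k + β₂))) * lam ^ k *
          t ^ (α₁ * k + β₁ - 1) /
            (Real.Gamma (α₁ * k + β₁) * Real.Gamma (α₂ * k + β₂)))
      = -((1 / s ^ β₁) *
          ∑' k : ℕ, (digamma (α₂ * k + β₂) / Real.Gamma (α₂ * k + β₂)) *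
            (lam * s ^ (-α₁)) ^ k) := by
  have hone : (0:ℝ) < 1 / s := by positivity
  -- positivity of the exponents
  have hapos : ∀ k : ℕ, (0:ℝ) < α₁ * k + β₁ := fun k => by
    have : (0:ℝ) ≤ α₁ * k := by positivity
    linarith
  have hbpos : ∀ k : ℕ, (0:ℝ) < α₂ * k + β₂ := fun k => by
    have : (0:ℝ) ≤ α₂ * k := by positivity
    linarith
  have hG1 : ∀ k : ℕ, (0:ℝ) < Real.Gamma (α₁ * k + β₁) := fun k => Real.Gamma_pos_of_pos (hapos k)
  have hG2 : ∀ k : ℕ, (0:ℝ) < Real.Gamma (α₂ * k + β₂) := fun k => Real.Gamma_pos_of_pos (hbpos k)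
  -- the summands
  set C : ℕ → ℝ := fun k => -(digamma (α₂ * k + β₂)) * lam ^ k /
      (Real.Gamma (α₁ * k + β₁) * Real.Gamma (α₂ * k + β₂)) with hC
  set F : ℕ → ℝ → ℝ := fun k t => C k * (t ^ (α₁ * k + β₁ - 1) * Real.exp (-(s * t))) with hF
  -- base integrability
  have hbase : ∀ a : ℝ, 0 < a →
      IntegrableOn (fun t : ℝ => t ^ (a - 1) * Real.exp (-(s * t))) (Ioi 0) := by
    intro a ha
    have h := integrableOn_rpow_mul_exp_neg_mul_rpow (p := 1) (s := a - 1) (b := s)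
      (by linarith) one_pos hs
    refine h.congr_fun (fun t ht => ?_) measurableSet_Ioi
    beta_reduce
    rw [Real.rpow_one, neg_mul]
  have hint : ∀ k : ℕ, Integrable (F k) (volume.restrict (Ioi 0)) := fun k =>
    ((hbase _ (hapos k)).const_mul (C k))
  -- value of each integral
  have hval : ∀ a : ℝ, 0 < a →
      ∫ t in Ioi (0:ℝ), t ^ (a - 1) * Real.exp (-(s * t)) = (1 / s) ^ a * Real.Gamma a :=
    fun a ha => Real.integral_rpow_mul_exp_neg_mul_Ioi ha hs
  have hvalF : ∀ k : ℕ, ∫ t in Ioi (0:ℝ), F k t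
      = C k * ((1 / s) ^ (α₁ * k + β₁) * Real.Gamma (α₁ * k + β₁)) := by
    intro k
    rw [hF]
    rw [integral_const_mul, hval _ (hapos k)]
  -- norm integrals
  have hnorm : ∀ k : ℕ, ∫ t in Ioi (0:ℝ), ‖F k t‖
      = |C k| * ((1 / s) ^ (α₁ * k + β₁) * Real.Gamma (α₁ * k + β₁)) := by
    intro k
    have : ∫ t in Ioi (0:ℝ), ‖F k t‖
        = ∫ t in Ioi (0:ℝ), |C k| * (t ^ (α₁ * k + β₁ - 1) * Real.exp (-(s * t))) := by
      refine setIntegral_congr_fun measurableSet_Ioi (fun t ht => ?_)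
      rw [hF]
      have h1 : (0:ℝ) ≤ t ^ (α₁ * k + β₁ - 1) := Real.rpow_nonneg (le_of_lt ht) _
      have h2 : (0:ℝ) < Real.exp (-(s * t)) := Real.exp_pos _
      rw [Real.norm_eq_abs, abs_mul, abs_of_nonneg (mul_nonneg h1 h2.le)]
    rw [this, integral_const_mul, hval _ (hapos k)]
  -- rpow splitting
  have hsplit : ∀ k : ℕ, (1 / s) ^ (α₁ * (k:ℝ) + β₁) = ((1/s) ^ α₁) ^ (k:ℕ) * (1/s) ^ β₁ := by
    intro k
    rw [Real.rpow_add hone, Real.rpow_mul hone.le, Real.rpow_natCast]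
  -- summability of the norm integrals
  have hsum : Summable (fun k : ℕ => ∫ t in Ioi (0:ℝ), ‖F k t‖) := by
    have base := (summable_digamma_div_Gamma hα₂ hβ₂
      (r := |lam| * (1/s) ^ α₁) (by positivity)).mul_right ((1/s) ^ β₁)
    refine base.congr fun k => ?_
    rw [hnorm k, hC]
    have hprod : (0:ℝ) < Real.Gamma (α₁ * k + β₁) * Real.Gamma (α₂ * k + β₂) :=
      mul_pos (hG1 k) (hG2 k)
    rw [abs_div, abs_mul, abs_of_pos hprod, abs_neg, abs_pow, hsplit k, mul_pow]
    field_simp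
  -- interchange
  have hinterchange := MeasureTheory.integral_tsum_of_summable_integral_norm hint hsum
  have hintegrand : (fun t : ℝ => Real.exp (-(s * t)) *
        ∑' k : ℕ, (-(digamma (α₂ * k + β₂))) * lam ^ k * t ^ (α₁ * k + β₁ - 1) /
          (Real.Gamma (α₁ * k + β₁) * Real.Gamma (α₂ * k + β₂)))
      = fun t : ℝ => ∑' k : ℕ, F k t := by
    funext t
    rw [← tsum_mul_left]
    exact tsum_congr fun k => by rw [hF, hC]; ring
  rw [hintegrand, ← hinterchange]
  -- now evaluate the sum
  have hterm : ∀ k : ℕ, (∫ t in Ioi (0:ℝ), F k t)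
      = (-(1 / s ^ β₁)) * ((digamma (α₂ * k + β₂) / Real.Gamma (α₂ * k + β₂)) *
          (lam * s ^ (-α₁)) ^ k) := by
    intro k
    rw [hvalF k, hC, hsplit k]
    have h1 : s ^ (-α₁) = (1/s) ^ α₁ := by
      rw [Real.rpow_neg hs.le, one_div, Real.inv_rpow hs.le]
    have h2 : (1:ℝ) / s ^ β₁ = (1/s) ^ β₁ := by
      rw [one_div, one_div, Real.inv_rpow hs.le]
    rw [h1, h2, mul_pow]
    field_simp
  calc ∑' k : ℕ, ∫ t in Ioi (0:ℝ), F k t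
      = ∑' k : ℕ, (-(1 / s ^ β₁)) * ((digamma (α₂ * k + β₂) / Real.Gamma (α₂ * k + β₂)) *
          (lam * s ^ (-α₁)) ^ k) := tsum_congr hterm
    _ = _ := by rw [tsum_mul_left, neg_mul]
end

section
/- Let α > 0, β > 0, γ > 1, λ ∈ ℝ, and let s > 0 be a real number. Then ∫₀^∞ e^{−st} · (∑_{k=0}^∞ (− ln Γ(αk+β)) · λ^k · t^{αk+β−1} / Γ(αk+β)^γ) dt = − (1/s^β) · ∑_{k=0}^∞ (λ · s^{−α})^k · ln Γ(αk+β) / Γ(αk+β)^{γ−1}. (The integrand series is the term-by-term derivative with respect to γ of t^{β−1} F^{(γ)}_{α,β}(λ t^α).) -/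
open Real MeasureTheory

lemma aux_gamma_growth {x a : ℝ} (hx : 2 ≤ x) (ha : 0 < a) :
    (x - 1) ^ a * Real.Gamma x ≤ Real.Gamma (x + a) := by
  have hx1 : (0:ℝ) < x - 1 := by linarith
  have hx0 : (0:ℝ) < x := by linarith
  have hxa : (0:ℝ) < x + a := by linarith
  have hslope := Real.convexOn_log_Gamma.slope_mono_adjacent
      (Set.mem_Ioi.mpr hx1) (Set.mem_Ioi.mpr hxa)
      (by linarith : x - 1 < x) (by linarith : x < x + a)
  simp only [Function.comp_apply] at hslope
  have hG : Real.Gamma x = (x - 1) * Real.Gamma (x - 1) := by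
    have := Real.Gamma_add_one hx1.ne'
    simpa using this
  have hnum : Real.log (Real.Gamma x) - Real.log (Real.Gamma (x - 1)) = Real.log (x - 1) := by
    rw [hG, Real.log_mul hx1.ne' (Real.Gamma_pos_of_pos hx1).ne']
    ring
  have hden1 : x - (x - 1) = 1 := by ring
  have hden2 : x + a - x = a := by ring
  rw [hden1, hden2, hnum, div_one, le_div_iff₀ ha] at hslope
  -- hslope : log (x-1) * a ≤ log Γ(x+a) - log Γ x ... check orientation
  have hkey : a * Real.log (x - 1) + Real.log (Real.Gamma x) ≤ Real.log (Real.Gamma (x + a)) := by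
    nlinarith [hslope]
  have := Real.exp_le_exp.mpr hkey
  rw [Real.exp_add, Real.exp_log (Real.Gamma_pos_of_pos hx0),
    Real.exp_log (Real.Gamma_pos_of_pos hxa)] at this
  calc (x - 1) ^ a * Real.Gamma x = Real.exp (a * Real.log (x - 1)) * Real.Gamma x := by
        rw [Real.rpow_def_of_pos hx1, mul_comm (Real.log (x-1))]
    _ ≤ Real.Gamma (x + a) := this

lemma one_le_Gamma_of_two_le {x : ℝ} (hx : 2 ≤ x) : 1 ≤ Real.Gamma x := by
  rcases eq_or_lt_of_le hx with h | h
  · rw [← h, Real.Gamma_two]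
  · have := Real.Gamma_strictMonoOn_Ici (Set.self_mem_Ici) (Set.mem_Ici.mpr hx) h
    · rw [Real.Gamma_two] at this; exact this.le

lemma aux_summable {α β δ r : ℝ} (hα : 0 < α) (hβ : 0 < β) (hδ : 0 < δ) (hr : 0 ≤ r) :
    Summable (fun k : ℕ => r ^ k *
      (|Real.log (Real.Gamma (α * k + β))| / Real.Gamma (α * k + β) ^ δ)) := by
  set ε := δ / 2 with hε
  have hε0 : 0 < ε := by positivity
  have hGpos : ∀ k : ℕ, 0 < Real.Gamma (α * k + β) := fun k =>
    Real.Gamma_pos_of_pos (by positivity)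
  have htend : Filter.Tendsto (fun k : ℕ => α * k + β) Filter.atTop Filter.atTop := by
    apply Filter.tendsto_atTop_add_const_right
    exact (tendsto_natCast_atTop_atTop (R := ℝ)).const_mul_atTop hα
  have h2 : ∀ᶠ k : ℕ in Filter.atTop, 2 ≤ α * k + β := htend.eventually_ge_atTop 2
  have h3 : ∀ᶠ k : ℕ in Filter.atTop, 2 * r + 1 ≤ (α * k + β - 1) ^ (α * ε) := by
    have hpow : Filter.Tendsto (fun x : ℝ => x ^ (α * ε)) Filter.atTop Filter.atTop :=
      tendsto_rpow_atTop (by positivity)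
    have htend1 : Filter.Tendsto (fun k : ℕ => α * k + β - 1) Filter.atTop Filter.atTop := by
      simpa [sub_eq_add_neg] using Filter.tendsto_atTop_add_const_right Filter.atTop (-1) htend
    exact (hpow.comp htend1).eventually_ge_atTop _
  -- the comparison sequence
  have hb : Summable (fun k : ℕ => r ^ k / Real.Gamma (α * k + β) ^ ε) := by
    apply summable_of_ratio_norm_eventually_le (r := 1/2) (by norm_num)
    filter_upwards [h2, h3] with k hk2 hk3
    have hc1 : (0:ℝ) < α * k + β - 1 := by linarith
    have harg : α * ((k : ℕ) + 1 : ℕ) + β = α * k + β + α := by push_cast; ring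
    have hgrow : (α * k + β - 1) ^ α * Real.Gamma (α * k + β)
        ≤ Real.Gamma (α * k + β + α) := aux_gamma_growth hk2 hα
    have hG := hGpos k
    have hG' : 0 < Real.Gamma (α * k + β + α) := Real.Gamma_pos_of_pos (by positivity)
    have hgrowε : (α * k + β - 1) ^ (α * ε) * Real.Gamma (α * k + β) ^ ε
        ≤ Real.Gamma (α * k + β + α) ^ ε := by
      rw [Real.rpow_mul hc1.le, ← Real.mul_rpow (by positivity) hG.le]
      exact Real.rpow_le_rpow (by positivity) hgrow hε0.le
    have hpos1 : (0:ℝ) < (α * k + β - 1) ^ (α * ε) := by positivity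
    rw [Real.norm_of_nonneg (by positivity), Real.norm_of_nonneg (by positivity), harg]
    calc r ^ (k + 1) / Real.Gamma (α * k + β + α) ^ ε
        ≤ r ^ (k + 1) / ((α * k + β - 1) ^ (α * ε) * Real.Gamma (α * k + β) ^ ε) := by
          gcongr
      _ = (r / (α * k + β - 1) ^ (α * ε)) * (r ^ k / Real.Gamma (α * k + β) ^ ε) := by
          field_simp; ring
      _ ≤ (1/2) * (r ^ k / Real.Gamma (α * k + β) ^ ε) := by
          apply mul_le_mul_of_nonneg_right _ (by positivity)
          have h1 : r / (α * k + β - 1) ^ (α * ε) ≤ r / (2 * r + 1) := by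
            gcongr
          have h2 : r / (2 * r + 1) ≤ 1/2 := by
            rw [div_le_div_iff₀ (by positivity) (by norm_num)]; linarith
          linarith
  apply summable_of_isBigO_nat (hb.mul_left (1/ε))
  rw [Asymptotics.isBigO_iff]
  refine ⟨1, ?_⟩
  filter_upwards [h2] with k hk2
  have hG := hGpos k
  have hG1 : 1 ≤ Real.Gamma (α * k + β) := one_le_Gamma_of_two_le hk2
  have hlog0 : 0 ≤ Real.log (Real.Gamma (α * k + β)) := Real.log_nonneg hG1
  have hlogle : Real.log (Real.Gamma (α * k + β))
      ≤ Real.Gamma (α * k + β) ^ ε / ε := by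
    have h1 : Real.log (Real.Gamma (α * k + β) ^ ε)
        ≤ Real.Gamma (α * k + β) ^ ε - 1 :=
      Real.log_le_sub_one_of_pos (by positivity)
    rw [Real.log_rpow hG] at h1
    rw [← mul_le_mul_iff_right₀ hε0, mul_div_cancel₀ _ hε0.ne']
    linarith [Real.rpow_pos_of_pos hG ε]
  have hsplit : Real.Gamma (α * k + β) ^ δ
      = Real.Gamma (α * k + β) ^ ε * Real.Gamma (α * k + β) ^ ε := by
    rw [← Real.rpow_add hG]
    congr 1
    rw [hε]; ring
  have hεG : (0:ℝ) < Real.Gamma (α * k + β) ^ ε := by positivity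
  have h4 : Real.log (Real.Gamma (α * k + β)) / Real.Gamma (α * k + β) ^ δ
      ≤ (Real.Gamma (α * k + β) ^ ε / ε) / Real.Gamma (α * k + β) ^ δ := by
    gcongr
  have h5 : (Real.Gamma (α * k + β) ^ ε / ε) / Real.Gamma (α * k + β) ^ δ
      = 1/ε * (1 / Real.Gamma (α * k + β) ^ ε) := by
    rw [hsplit]; field_simp
  have key : r ^ k * (Real.log (Real.Gamma (α * k + β)) / Real.Gamma (α * k + β) ^ δ)
      ≤ 1/ε * (r ^ k / Real.Gamma (α * k + β) ^ ε) := by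
    calc r ^ k * (Real.log (Real.Gamma (α * k + β)) / Real.Gamma (α * k + β) ^ δ)
        ≤ r ^ k * (1/ε * (1 / Real.Gamma (α * k + β) ^ ε)) := by
          apply mul_le_mul_of_nonneg_left _ (by positivity)
          rw [← h5]; exact h4
      _ = 1/ε * (r ^ k / Real.Gamma (α * k + β) ^ ε) := by ring
  rw [Real.norm_of_nonneg (by positivity), Real.norm_of_nonneg (by positivity),
    abs_of_nonneg hlog0, one_mul]
  exact key

theorem laplace_deriv_gamma_LeRoy (α β γ lam s : ℝ) (hα : 0 < α) (hβ : 0 < β)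
    (hγ : 1 < γ) (hs : 0 < s) :
    (∫ t in Set.Ioi (0 : ℝ), Real.exp (-(s * t)) *
        ∑' k : ℕ, (-(Real.log (Real.Gamma (α * k + β)))) * lam ^ k *
          t ^ (α * k + β - 1) / Real.Gamma (α * k + β) ^ γ)
      = -((1 / s ^ β) *
          ∑' k : ℕ, (lam * s ^ (-α)) ^ k * Real.log (Real.Gamma (α * k + β)) /
            Real.Gamma (α * k + β) ^ (γ - 1)) := by
  have hcpos : ∀ k : ℕ, (0:ℝ) < α * k + β := fun k => by positivity
  have hGpos : ∀ k : ℕ, 0 < Real.Gamma (α * k + β) := fun k =>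
    Real.Gamma_pos_of_pos (hcpos k)
  set w : ℕ → ℝ := fun k => -(Real.log (Real.Gamma (α * k + β))) * lam ^ k /
      Real.Gamma (α * k + β) ^ γ with hw
  -- rewrite the integrand as a single tsum
  have hptwise : ∀ t : ℝ, Real.exp (-(s * t)) *
      (∑' k : ℕ, (-(Real.log (Real.Gamma (α * k + β)))) * lam ^ k *
        t ^ (α * k + β - 1) / Real.Gamma (α * k + β) ^ γ)
      = ∑' k : ℕ, w k * (t ^ (α * k + β - 1) * Real.exp (-(s * t))) := by
    intro t
    rw [← tsum_mul_left]
    apply tsum_congr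
    intro k
    rw [hw]
    ring
  have hint : ∀ k : ℕ, IntegrableOn
      (fun t : ℝ => w k * (t ^ (α * k + β - 1) * Real.exp (-(s * t)))) (Set.Ioi 0) := by
    intro k
    have h0 : IntegrableOn (fun t : ℝ => t ^ (α * k + β - 1) * Real.exp (-(s * t)))
        (Set.Ioi 0) := by
      have := integrableOn_rpow_mul_exp_neg_mul_rpow
        (s := α * k + β - 1) (p := 1) (b := s) (by linarith [hcpos k]) (by norm_num) hs
      simpa [neg_mul] using this
    exact h0.const_mul _
  have hnorm : ∀ k : ℕ, (∫ t in Set.Ioi (0:ℝ),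
      ‖w k * (t ^ (α * k + β - 1) * Real.exp (-(s * t)))‖)
      = |w k| * ((1 / s) ^ (α * k + β) * Real.Gamma (α * k + β)) := by
    intro k
    have h1 : (∫ t in Set.Ioi (0:ℝ), ‖w k * (t ^ (α * k + β - 1) * Real.exp (-(s * t)))‖)
        = ∫ t in Set.Ioi (0:ℝ), |w k| * (t ^ (α * k + β - 1) * Real.exp (-(s * t))) := by
      apply setIntegral_congr_fun measurableSet_Ioi
      intro t ht
      have ht0 : (0:ℝ) < t := ht
      simp only [Real.norm_eq_abs, abs_mul, Real.abs_exp,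
        abs_of_nonneg (Real.rpow_nonneg ht0.le (α * k + β - 1))]
    rw [h1, MeasureTheory.integral_const_mul,
      Real.integral_rpow_mul_exp_neg_mul_Ioi (hcpos k) hs]
  have hwabs : ∀ k : ℕ, |w k| = |Real.log (Real.Gamma (α * k + β))| * |lam| ^ k /
      Real.Gamma (α * k + β) ^ γ := by
    intro k
    rw [hw]
    rw [abs_div, abs_mul, abs_neg, abs_pow,
      abs_of_pos (Real.rpow_pos_of_pos (hGpos k) γ)]
  have hsplit_k : ∀ k : ℕ, ((1:ℝ) / s) ^ (α * k + β)
      = ((1 / s) ^ α) ^ k * (1 / s) ^ β := by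
    intro k
    rw [Real.rpow_add (by positivity), ← Real.rpow_natCast ((1/s) ^ α) k,
      ← Real.rpow_mul (by positivity)]
  have hGam : ∀ k : ℕ, Real.Gamma (α * k + β) ^ γ
      = Real.Gamma (α * k + β) ^ (γ - 1) * Real.Gamma (α * k + β) := by
    intro k
    rw [← Real.rpow_add_one (hGpos k).ne' (γ - 1)]
    norm_num
  have hsum : Summable (fun k : ℕ => ∫ t in Set.Ioi (0:ℝ),
      ‖w k * (t ^ (α * k + β - 1) * Real.exp (-(s * t)))‖) := by
    simp only [hnorm]
    have heq : ∀ k : ℕ, |w k| * ((1 / s) ^ (α * k + β) * Real.Gamma (α * k + β))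
        = (1 / s) ^ β * ((|lam| * (1/s) ^ α) ^ k *
          (|Real.log (Real.Gamma (α * k + β))| / Real.Gamma (α * k + β) ^ (γ - 1))) := by
      intro k
      rw [hwabs k, hsplit_k k, hGam k, mul_pow]
      have h2 : Real.Gamma (α * k + β) ^ (γ - 1) ≠ 0 :=
        (Real.rpow_pos_of_pos (hGpos k) _).ne'
      field_simp
    simp only [heq]
    exact (aux_summable hα hβ (by linarith : (0:ℝ) < γ - 1)
      (by positivity : (0:ℝ) ≤ |lam| * (1/s) ^ α)).mul_left _
  have hswap := integral_tsum_of_summable_integral_norm hint hsum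
  simp only [hptwise]
  rw [← hswap]
  have hval : ∀ k : ℕ, (∫ t in Set.Ioi (0:ℝ),
      w k * (t ^ (α * k + β - 1) * Real.exp (-(s * t))))
      = w k * ((1 / s) ^ (α * k + β) * Real.Gamma (α * k + β)) := by
    intro k
    rw [MeasureTheory.integral_const_mul,
      Real.integral_rpow_mul_exp_neg_mul_Ioi (hcpos k) hs]
  simp only [hval]
  have hsa : s ^ (-α) = (1/s) ^ α := by
    rw [one_div, Real.rpow_neg hs.le, ← Real.inv_rpow hs.le]
  have hsb : ((1:ℝ)/s) ^ β = 1 / s ^ β := by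
    rw [one_div, Real.inv_rpow hs.le, one_div]
  have hterm : ∀ k : ℕ, w k * ((1 / s) ^ (α * k + β) * Real.Gamma (α * k + β))
      = (-(1 / s ^ β)) * ((lam * s ^ (-α)) ^ k * Real.log (Real.Gamma (α * k + β)) /
          Real.Gamma (α * k + β) ^ (γ - 1)) := by
    intro k
    simp only [hw]
    rw [hsplit_k k, hGam k, mul_pow, hsa, hsb]
    have h2 : Real.Gamma (α * k + β) ^ (γ - 1) ≠ 0 :=
      (Real.rpow_pos_of_pos (hGpos k) _).ne'
    have h3 : s ^ β ≠ 0 := (Real.rpow_pos_of_pos hs β).ne'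
    have h4 : Real.Gamma (α * k + β) ≠ 0 := (hGpos k).ne'
    field_simp
  simp only [hterm]
  rw [tsum_mul_left]
  ring
end
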